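/- Deterministic basic inequality for ridge regression: Let w̄ ∈ ℝ^d satisfy ‖w̄‖_2 ≤ R, set ζ_i = y_i − ⟨x_i, w̄⟩ for i = 1, …, n, and define Z = sup { (1/n) ∑_{i=1}^n ⟨x_i, w⟩ ζ_i : w ∈ ℝ^d, ‖w‖_D ≤ 1 }. Then the ridge estimate ŵ satisfies ‖ŵ − w̄‖²_D ≤ 2 ‖ŵ − w̄‖_D · Z + λ R². -/
import Mathlib


open Matrix

noncomputable section

namespace RidgeBasic

variable (d n : ℕ)

/-- Empirical covariance `Σ̂ = (1/n) ∑ xᵢ xᵢᵀ`. -/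
def empCov (x : Fin n → Fin d → ℝ) : Matrix (Fin d) (Fin d) ℝ :=
  Matrix.of fun i j => (n : ℝ)⁻¹ * ∑ k, x k i * x k j

/-- The norm `‖w‖_D = (wᵀ (Σ̂ + λ I) w)^{1/2}`. -/
def normD (x : Fin n → Fin d → ℝ) (lam : ℝ) (w : Fin d → ℝ) : ℝ :=
  Real.sqrt (w ⬝ᵥ (empCov d n x + lam • (1 : Matrix (Fin d) (Fin d) ℝ)).mulVec w)

/-- The ridge-regression objective. -/
def ridgeLoss (x : Fin n → Fin d → ℝ) (y : Fin n → ℝ) (lam : ℝ) (w : Fin d → ℝ) : ℝ :=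
  (n : ℝ)⁻¹ * ∑ i, (x i ⬝ᵥ w - y i) ^ 2 + lam * ∑ j, w j ^ 2

/-- `Z = sup { (1/n) ∑ᵢ ⟨xᵢ, w⟩ ζᵢ : ‖w‖_D ≤ 1 }`. -/
def Zsup (x : Fin n → Fin d → ℝ) (lam : ℝ) (ζ : Fin n → ℝ) : ℝ :=
  sSup {t | ∃ w : Fin d → ℝ, normD d n x lam w ≤ 1 ∧
    t = (n : ℝ)⁻¹ * ∑ i, (x i ⬝ᵥ w) * ζ i}

lemma quadform (x : Fin n → Fin d → ℝ) (lam : ℝ) (w : Fin d → ℝ) :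
    w ⬝ᵥ (empCov d n x + lam • (1 : Matrix (Fin d) (Fin d) ℝ)).mulVec w
      = (n : ℝ)⁻¹ * ∑ k, (x k ⬝ᵥ w) ^ 2 + lam * ∑ j, w j ^ 2 := by
  rw [Matrix.add_mulVec, dotProduct_add]
  congr 1
  · simp only [empCov, Matrix.mulVec, dotProduct, Matrix.of_apply]
    rw [Finset.mul_sum]
    calc ∑ i, w i * ∑ j, ((n:ℝ)⁻¹ * ∑ k, x k i * x k j) * w j
        = ∑ i, ∑ k, ∑ j, (n:ℝ)⁻¹ * ((x k i * w i) * (x k j * w j)) := by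
          refine Finset.sum_congr rfl fun i _ => ?_
          rw [Finset.mul_sum, Finset.sum_comm]
          refine Finset.sum_congr rfl fun j _ => ?_
          simp only [Finset.mul_sum, Finset.sum_mul]
          exact Finset.sum_congr rfl fun k _ => by ring
      _ = ∑ k, ∑ i, ∑ j, (n:ℝ)⁻¹ * ((x k i * w i) * (x k j * w j)) := by
          rw [Finset.sum_comm]
      _ = ∑ k, (n:ℝ)⁻¹ * (∑ j, x k j * w j) ^ 2 := by
          refine Finset.sum_congr rfl fun k _ => ?_
          rw [sq, Finset.sum_mul_sum, Finset.mul_sum]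
          refine Finset.sum_congr rfl fun i _ => ?_
          rw [Finset.mul_sum]
  · simp only [Matrix.smul_mulVec, Matrix.one_mulVec, dotProduct_smul, dotProduct,
      smul_eq_mul, Pi.smul_apply, Finset.mul_sum]
    refine Finset.sum_congr rfl fun j _ => by ring

set_option maxHeartbeats 1000000 in
/-- deterministic basic inequality for ridge regression. -/
theorem ridge_basic_inequality
    (hn : 0 < n)
    (x : Fin n → Fin d → ℝ) (y : Fin n → ℝ)
    (lam : ℝ) (hlam : 0 < lam)
    (wbar : Fin d → ℝ) (R : ℝ) (hR : Real.sqrt (∑ j, wbar j ^ 2) ≤ R)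
    (what : Fin d → ℝ)
    (hmin : ∀ w : Fin d → ℝ, ridgeLoss d n x y lam what ≤ ridgeLoss d n x y lam w) :
    normD d n x lam (what - wbar) ^ 2 ≤
      2 * normD d n x lam (what - wbar) *
          Zsup d n x lam (fun i => y i - x i ⬝ᵥ wbar) +
        lam * R ^ 2 := by
  have hn' : (0:ℝ) < (n:ℝ)⁻¹ := by positivity
  set v : Fin d → ℝ := what - wbar with hv
  set ζ : Fin n → ℝ := fun i => y i - x i ⬝ᵥ wbar with hζ
  set Q : ℝ := (n:ℝ)⁻¹ * ∑ i, (x i ⬝ᵥ v) ^ 2 + lam * ∑ j, v j ^ 2 with hQ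
  set T : ℝ := (n:ℝ)⁻¹ * ∑ i, (x i ⬝ᵥ v) * ζ i with hT
  set P : ℝ := ∑ j, wbar j * v j with hP
  set D : ℝ := normD d n x lam v with hD
  set Z : ℝ := Zsup d n x lam ζ with hZ
  have hsv : (0:ℝ) ≤ ∑ j, v j ^ 2 := Finset.sum_nonneg fun j _ => sq_nonneg _
  have hsb : (0:ℝ) ≤ ∑ i, (x i ⬝ᵥ v) ^ 2 := Finset.sum_nonneg fun i _ => sq_nonneg _
  have hQnn : 0 ≤ Q := by rw [hQ]; positivity
  have hDsq : D ^ 2 = Q := by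
    rw [hD, normD, quadform, hQ]
    exact Real.sq_sqrt (by positivity)
  have hDnn : 0 ≤ D := Real.sqrt_nonneg _
  -- first-order condition
  have hBzero : (n:ℝ)⁻¹ * ∑ i, (x i ⬝ᵥ what - y i) * (x i ⬝ᵥ v) + lam * ∑ j, what j * v j
      = 0 := by
    set B : ℝ := 2 * ((n:ℝ)⁻¹ * ∑ i, (x i ⬝ᵥ what - y i) * (x i ⬝ᵥ v)
      + lam * ∑ j, what j * v j) with hBdef
    have hexp : ∀ t : ℝ, ridgeLoss d n x y lam (what + t • v)
        = ridgeLoss d n x y lam what + B * t + Q * t ^ 2 := by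
      intro t
      simp only [ridgeLoss, dotProduct_add, dotProduct_smul, smul_eq_mul, Pi.add_apply,
        Pi.smul_apply, hBdef, hQ]
      have h1 : ∑ i, (x i ⬝ᵥ what + t * (x i ⬝ᵥ v) - y i) ^ 2
          = ∑ i, ((x i ⬝ᵥ what - y i) ^ 2 + 2 * t * ((x i ⬝ᵥ what - y i) * (x i ⬝ᵥ v))
              + t ^ 2 * (x i ⬝ᵥ v) ^ 2) := Finset.sum_congr rfl fun i _ => by ring
      have h2 : ∑ j, (what j + t * v j) ^ 2
          = ∑ j, (what j ^ 2 + 2 * t * (what j * v j) + t ^ 2 * v j ^ 2) :=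
        Finset.sum_congr rfl fun j _ => by ring
      rw [h1, h2]
      simp only [Finset.sum_add_distrib, ← Finset.mul_sum]
      ring
    have key : ∀ t : ℝ, 0 ≤ Q * t ^ 2 + B * t := by
      intro t
      have := hmin (what + t • v)
      rw [hexp t] at this
      linarith
    have hQ1 : (0:ℝ) < Q + 1 := by linarith
    have h := key (-(B / (Q + 1)))
    have e : Q * (-(B / (Q + 1))) ^ 2 + B * (-(B / (Q + 1)))
        = -(B ^ 2 / (Q + 1) ^ 2) := by
      field_simp
      ring
    rw [e] at h
    have h2 : B ^ 2 = B ^ 2 / (Q + 1) ^ 2 * (Q + 1) ^ 2 := by field_simp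
    have hB2 : B ^ 2 ≤ 0 := by
      rw [h2]
      exact mul_nonpos_of_nonpos_of_nonneg (by linarith) (sq_nonneg _)
    have hB0 : B = 0 := by
      have := sq_eq_zero_iff.mp (le_antisymm hB2 (sq_nonneg B))
      simpa using this
    rw [hBdef] at hB0
    linarith
  -- key identity Q = T - lam * P
  have hkey : Q = T - lam * P := by
    have e1 : ∑ i, (x i ⬝ᵥ what - y i) * (x i ⬝ᵥ v)
        = ∑ i, (x i ⬝ᵥ v) ^ 2 - ∑ i, (x i ⬝ᵥ v) * ζ i := by
      rw [← Finset.sum_sub_distrib]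
      refine Finset.sum_congr rfl fun i _ => ?_
      have h : x i ⬝ᵥ what - y i = (x i ⬝ᵥ v) - ζ i := by
        simp only [hζ, hv, dotProduct_sub]; ring
      rw [h]; ring
    have e2 : ∑ j, what j * v j = ∑ j, v j ^ 2 + ∑ j, wbar j * v j := by
      rw [← Finset.sum_add_distrib]
      refine Finset.sum_congr rfl fun j _ => ?_
      have h : what j = v j + wbar j := by simp [hv]
      rw [h]; ring
    rw [e1, e2] at hBzero
    rw [hQ, hT, hP]
    rw [mul_sub, mul_add] at hBzero
    linarith
  -- T ≤ D * Z
  have hTZ : T ≤ D * Z := by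
    have hbdd : BddAbove {t | ∃ w : Fin d → ℝ, normD d n x lam w ≤ 1 ∧
        t = (n : ℝ)⁻¹ * ∑ i, (x i ⬝ᵥ w) * ζ i} := by
      refine ⟨(n:ℝ)⁻¹ * Real.sqrt ((n:ℝ) * ∑ i, ζ i ^ 2), ?_⟩
      rintro t ⟨w, hw1, rfl⟩
      have hsw : (0:ℝ) ≤ ∑ j, w j ^ 2 := Finset.sum_nonneg fun j _ => sq_nonneg _
      have hsxw : (0:ℝ) ≤ ∑ i, (x i ⬝ᵥ w) ^ 2 := Finset.sum_nonneg fun i _ => sq_nonneg _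
      have hQw : (n:ℝ)⁻¹ * ∑ i, (x i ⬝ᵥ w) ^ 2 + lam * ∑ j, w j ^ 2 ≤ 1 := by
        calc (n:ℝ)⁻¹ * ∑ i, (x i ⬝ᵥ w) ^ 2 + lam * ∑ j, w j ^ 2
            = Real.sqrt ((n:ℝ)⁻¹ * ∑ i, (x i ⬝ᵥ w) ^ 2 + lam * ∑ j, w j ^ 2) ^ 2 :=
              (Real.sq_sqrt (by positivity)).symm
          _ ≤ 1 ^ 2 := by
              apply pow_le_pow_left₀ (Real.sqrt_nonneg _)
              · calc Real.sqrt _ = normD d n x lam w := by rw [normD, quadform]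
                  _ ≤ 1 := hw1
          _ = 1 := one_pow 2
      have hsumsq : ∑ i, (x i ⬝ᵥ w) ^ 2 ≤ (n:ℝ) := by
        have h1 : (n:ℝ)⁻¹ * ∑ i, (x i ⬝ᵥ w) ^ 2 ≤ 1 := by nlinarith
        calc ∑ i, (x i ⬝ᵥ w) ^ 2 = (n:ℝ) * ((n:ℝ)⁻¹ * ∑ i, (x i ⬝ᵥ w) ^ 2) := by
              field_simp
          _ ≤ (n:ℝ) * 1 := mul_le_mul_of_nonneg_left h1 (by positivity)
          _ = (n:ℝ) := mul_one _
      have hcs : (∑ i, (x i ⬝ᵥ w) * ζ i) ^ 2 ≤ (n:ℝ) * ∑ i, ζ i ^ 2 := by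
        calc (∑ i, (x i ⬝ᵥ w) * ζ i) ^ 2
            ≤ (∑ i, (x i ⬝ᵥ w) ^ 2) * ∑ i, ζ i ^ 2 :=
              Finset.sum_mul_sq_le_sq_mul_sq _ _ _
          _ ≤ (n:ℝ) * ∑ i, ζ i ^ 2 :=
              mul_le_mul_of_nonneg_right hsumsq
                (Finset.sum_nonneg fun i _ => sq_nonneg _)
      have hfin : ∑ i, (x i ⬝ᵥ w) * ζ i ≤ Real.sqrt ((n:ℝ) * ∑ i, ζ i ^ 2) :=
        calc ∑ i, (x i ⬝ᵥ w) * ζ i ≤ |∑ i, (x i ⬝ᵥ w) * ζ i| := le_abs_self _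
          _ = Real.sqrt ((∑ i, (x i ⬝ᵥ w) * ζ i) ^ 2) := (Real.sqrt_sq_eq_abs _).symm
          _ ≤ Real.sqrt ((n:ℝ) * ∑ i, ζ i ^ 2) := Real.sqrt_le_sqrt hcs
      exact mul_le_mul_of_nonneg_left hfin (le_of_lt hn')
    rcases eq_or_lt_of_le hDnn with hD0 | hDpos
    · have hQ0 : Q = 0 := by rw [← hDsq, ← hD0]; norm_num
      have h6 : (n:ℝ)⁻¹ * ∑ i, (x i ⬝ᵥ v) ^ 2 = 0 := by
        have hlv : (0:ℝ) ≤ lam * ∑ j, v j ^ 2 := by positivity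
        have h7 : (n:ℝ)⁻¹ * ∑ i, (x i ⬝ᵥ v) ^ 2 + lam * ∑ j, v j ^ 2 = 0 := by
          rw [← hQ]; exact hQ0
        refine le_antisymm (by linarith) (by positivity)
      have hsb0 : ∑ i, (x i ⬝ᵥ v) ^ 2 = 0 :=
        (mul_eq_zero.mp h6).resolve_left (ne_of_gt hn')
      have hbz : ∀ i, x i ⬝ᵥ v = 0 := by
        intro i
        have := (Finset.sum_eq_zero_iff_of_nonneg
          (fun i _ => sq_nonneg (x i ⬝ᵥ v))).1 hsb0 i (Finset.mem_univ i)
        exact pow_eq_zero_iff (by norm_num) |>.1 this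
      have hT0 : T = 0 := by
        rw [hT, Finset.sum_eq_zero fun i _ => by rw [hbz i, zero_mul], mul_zero]
      rw [hT0, ← hD0, zero_mul]
    · have hmem : D⁻¹ * T ∈ {t | ∃ w : Fin d → ℝ, normD d n x lam w ≤ 1 ∧
          t = (n : ℝ)⁻¹ * ∑ i, (x i ⬝ᵥ w) * ζ i} := by
        refine ⟨D⁻¹ • v, ?_, ?_⟩
        · rw [normD, quadform]
          have e1 : ∑ k, (x k ⬝ᵥ (D⁻¹ • v)) ^ 2 = D⁻¹ ^ 2 * ∑ k, (x k ⬝ᵥ v) ^ 2 := by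
            rw [Finset.mul_sum]
            exact Finset.sum_congr rfl fun k _ => by
              rw [dotProduct_smul, smul_eq_mul]; ring
          have e2 : ∑ j, ((D⁻¹ • v) j) ^ 2 = D⁻¹ ^ 2 * ∑ j, v j ^ 2 := by
            rw [Finset.mul_sum]
            exact Finset.sum_congr rfl fun j _ => by
              rw [Pi.smul_apply, smul_eq_mul]; ring
          have e3 : (n:ℝ)⁻¹ * (D⁻¹ ^ 2 * ∑ k, (x k ⬝ᵥ v) ^ 2)
              + lam * (D⁻¹ ^ 2 * ∑ j, v j ^ 2) = D⁻¹ ^ 2 * Q := by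
            rw [hQ]; ring
          rw [e1, e2, e3, ← hDsq,
            show D⁻¹ ^ 2 * D ^ 2 = (D⁻¹ * D) ^ 2 by ring,
            inv_mul_cancel₀ (ne_of_gt hDpos), one_pow, Real.sqrt_one]
        · have e4 : ∑ i, (x i ⬝ᵥ (D⁻¹ • v)) * ζ i = D⁻¹ * ∑ i, (x i ⬝ᵥ v) * ζ i := by
            rw [Finset.mul_sum]
            exact Finset.sum_congr rfl fun i _ => by
              rw [dotProduct_smul, smul_eq_mul]; ring
          rw [e4, hT]; ring
      have hle : D⁻¹ * T ≤ Z := by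
        rw [hZ, Zsup]
        exact le_csSup hbdd hmem
      calc T = D * (D⁻¹ * T) := by
            rw [← mul_assoc, mul_inv_cancel₀ (ne_of_gt hDpos), one_mul]
        _ ≤ D * Z := mul_le_mul_of_nonneg_left hle hDnn
  -- -lam * P ≤ sqrt(lam) * R * D
  have hRnn : 0 ≤ R := le_trans (Real.sqrt_nonneg _) hR
  have hPbd : -(lam * P) ≤ Real.sqrt lam * R * D := by
    have hcs : |P| ≤ Real.sqrt (∑ j, wbar j ^ 2) * Real.sqrt (∑ j, v j ^ 2) := by
      rw [← Real.sqrt_mul (Finset.sum_nonneg fun j _ => sq_nonneg _),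
        ← Real.sqrt_sq_eq_abs]
      exact Real.sqrt_le_sqrt (Finset.sum_mul_sq_le_sq_mul_sq _ _ _)
    have h1 : |P| ≤ R * Real.sqrt (∑ j, v j ^ 2) :=
      le_trans hcs (mul_le_mul_of_nonneg_right hR (Real.sqrt_nonneg _))
    have h2 : Real.sqrt lam * Real.sqrt (∑ j, v j ^ 2) ≤ D := by
      rw [← Real.sqrt_mul (le_of_lt hlam), hD, normD, quadform]
      apply Real.sqrt_le_sqrt
      have : (0:ℝ) ≤ (n:ℝ)⁻¹ * ∑ i, (x i ⬝ᵥ v) ^ 2 := by positivity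
      linarith
    have hsl : Real.sqrt lam * Real.sqrt lam = lam := Real.mul_self_sqrt (le_of_lt hlam)
    calc -(lam * P) = lam * (-P) := by ring
      _ ≤ lam * |P| := mul_le_mul_of_nonneg_left (neg_le_abs P) (le_of_lt hlam)
      _ ≤ lam * (R * Real.sqrt (∑ j, v j ^ 2)) :=
          mul_le_mul_of_nonneg_left h1 (le_of_lt hlam)
      _ = (Real.sqrt lam * R) * (Real.sqrt lam * Real.sqrt (∑ j, v j ^ 2)) := by
          linear_combination (R * Real.sqrt (∑ j, v j ^ 2)) * hsl.symm
      _ ≤ (Real.sqrt lam * R) * D := by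
          apply mul_le_mul_of_nonneg_left h2
          positivity
      _ = Real.sqrt lam * R * D := rfl
  -- combine
  have hsl2 : Real.sqrt lam ^ 2 = lam := Real.sq_sqrt (le_of_lt hlam)
  have h2ab : 2 * (Real.sqrt lam * R) * D ≤ lam * R ^ 2 + D ^ 2 := by
    have h := sq_nonneg (Real.sqrt lam * R - D)
    have e : (Real.sqrt lam * R - D) ^ 2
        = lam * R ^ 2 - 2 * (Real.sqrt lam * R) * D + D ^ 2 := by
      rw [sub_sq, mul_pow, hsl2]
    rw [e] at h
    linarith
  nlinarith [hDsq, hkey, hTZ, hPbd, h2ab]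


end RidgeBasic
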